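/- Structure of the derivative on level sets of the direction (Lipschitz case of Proposition 3.3): Let Ω ⊆ ℝ^d be a bounded open set, m ∈ ℕ, and V : Ω → ℝ^m Lipschitz continuous (so V is Fréchet differentiable almost everywhere, with derivative DV(x) : ℝ^d → ℝ^m). Then: (i) for every v ∈ ℝ^m, DV(x) = 0 for Lebesgue-a.e. x ∈ Ω with V(x) = v; and (ii) for every unit vector e ∈ ℝ^m, (Id_{ℝ^m} − e ⊗ e) ∘ DV(x) = 0 for Lebesgue-a.e. x ∈ Ω with V(x) ≠ 0 and V(x)/‖V(x)‖ = e. -/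

import Mathlib

open Set Filter Topology MeasureTheory

noncomputable section

abbrev Euc (d : ℕ) := EuclideanSpace ℝ (Fin d)

/-- The orthogonal projection of ℝ^m onto e^⊥, i.e. Id − e ⊗ e, as a continuous
linear map. -/
noncomputable def projPerp {m : ℕ} (e : Euc m) : Euc m →L[ℝ] Euc m :=
  ContinuousLinearMap.id ℝ (Euc m) - (innerSL ℝ e).smulRight e

lemma aux_fderiv_zero {d m : ℕ} {s : Set (Euc d)} (hs : MeasurableSet s)
    {f : Euc d → Euc m} {c : Euc m} (hc : ∀ x ∈ s, f x = c) :
    ∀ᵐ x : Euc d, (x ∈ s ∧ DifferentiableAt ℝ f x) → fderiv ℝ f x = 0 := by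
  rcases Nat.eq_zero_or_pos d with hd | hd
  · refine ae_of_all _ fun x _ => ?_
    subst hd
    ext h
    have : h = 0 := Subsingleton.elim _ _
    simp [this]
  set t := s ∩ {x | DifferentiableAt ℝ f x} with ht_def
  have ht : MeasurableSet t := hs.inter (measurableSet_of_differentiableAt ℝ f)
  set u : Euc d := EuclideanSpace.single ⟨0, hd⟩ 1 with hu
  have hu1 : ‖u‖ = 1 := by simp [hu]
  have hu0 : u ≠ 0 := by intro h; rw [h] at hu1; simp at hu1
  have key : ∀ j : Fin m, ∀ᵐ x : Euc d, x ∈ t →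
      ((innerSL ℝ (EuclideanSpace.single j (1:ℝ))).comp (fderiv ℝ f x)).smulRight u = 0 := by
    intro j
    set εj : Euc m := EuclideanSpace.single j (1:ℝ) with hεj
    set g : Euc d → Euc d := fun x => (innerSL ℝ εj (f x - c)) • u with hg
    have happ : ApproximatesLinearOn g (0 : Euc d →L[ℝ] Euc d) t 0 := by
      intro x hx y hy
      have hx0 : f x = c := hc x hx.1
      have hy0 : f y = c := hc y hy.1
      simp [hg, hx0, hy0]
    have hder : ∀ x ∈ t, HasFDerivWithinAt g
        (((innerSL ℝ εj).comp (fderiv ℝ f x)).smulRight u) t x := by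
      intro x hx
      have h1 : HasFDerivAt f (fderiv ℝ f x) x := hx.2.hasFDerivAt
      have h2 : HasFDerivAt (fun y => f y - c) (fderiv ℝ f x) x := h1.sub_const c
      have h3 : HasFDerivAt (fun y => innerSL ℝ εj (f y - c))
          ((innerSL ℝ εj).comp (fderiv ℝ f x)) x :=
        (innerSL ℝ εj).hasFDerivAt.comp x h2
      exact (h3.smul_const u).hasFDerivWithinAt
    have H := happ.norm_fderiv_sub_le volume ht
      (fun x => ((innerSL ℝ εj).comp (fderiv ℝ f x)).smulRight u) hder
    rw [ae_restrict_iff' ht] at H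
    filter_upwards [H] with x hx hxt
    have := hx hxt
    simp only [sub_zero, le_zero_iff, nnnorm_eq_zero] at this
    exact this
  have key' : ∀ᵐ x : Euc d, ∀ j : Fin m, x ∈ t →
      ((innerSL ℝ (EuclideanSpace.single j (1:ℝ))).comp (fderiv ℝ f x)).smulRight u = 0 :=
    ae_all_iff.2 key
  filter_upwards [key'] with x hx hmem
  have hxt : x ∈ t := ⟨hmem.1, hmem.2⟩
  ext h j
  have hj := congrArg (fun (L : Euc d →L[ℝ] Euc d) => L h) (hx j hxt)
  simp only [ContinuousLinearMap.smulRight_apply, ContinuousLinearMap.comp_apply,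
    ContinuousLinearMap.zero_apply] at hj
  have : (innerSL ℝ (EuclideanSpace.single j (1:ℝ))) (fderiv ℝ f x h) = 0 :=
    (smul_eq_zero.1 hj).resolve_right hu0
  simpa [EuclideanSpace.inner_single_left] using this

lemma meas_level {d m : ℕ} {Ω : Set (Euc d)} (hΩo : IsOpen Ω) {f : Euc d → Euc m}
    (hf : ContinuousOn f Ω) (v : Euc m) : MeasurableSet {x | x ∈ Ω ∧ f x = v} := by
  have h1 : IsOpen (Ω ∩ f ⁻¹' {v}ᶜ) :=
    hf.isOpen_inter_preimage hΩo isClosed_singleton.isOpen_compl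
  have h2 : {x | x ∈ Ω ∧ f x = v} = Ω \ (Ω ∩ f ⁻¹' {v}ᶜ) := by
    ext x; simp only [mem_setOf_eq, mem_diff, mem_inter_iff, mem_preimage, mem_compl_iff,
      mem_singleton_iff]; tauto
  rw [h2]
  exact hΩo.measurableSet.diff h1.measurableSet

/-- Structure of the derivative of a Lipschitz map on level sets of the value
and of the direction (Lipschitz case of Proposition 3.3). -/
theorem derivative_vanishes_on_level_sets (d m : ℕ)
    (Ω : Set (Euc d)) (hΩo : IsOpen Ω) (hΩb : Bornology.IsBounded Ω)
    (V : Euc d → Euc m) (hV : ∃ L : NNReal, LipschitzOnWith L V Ω) :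
    (∀ v : Euc m, ∀ᵐ x : Euc d,
      (x ∈ Ω ∧ V x = v ∧ DifferentiableAt ℝ V x) → fderiv ℝ V x = 0) ∧
    (∀ e : Euc m, ‖e‖ = 1 → ∀ᵐ x : Euc d,
      (x ∈ Ω ∧ V x ≠ 0 ∧ ‖V x‖⁻¹ • V x = e ∧ DifferentiableAt ℝ V x) →
        (projPerp e).comp (fderiv ℝ V x) = 0) := by
  obtain ⟨L, hL⟩ := hV
  have hcont : ContinuousOn V Ω := hL.continuousOn
  constructor
  · intro v
    have hs := meas_level hΩo hcont v
    have := aux_fderiv_zero hs (fun x hx => hx.2)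
    filter_upwards [this] with x hx hyp
    exact hx ⟨⟨hyp.1, hyp.2.1⟩, hyp.2.2⟩
  · intro e he
    set W : Euc d → Euc m := fun x => projPerp e (V x) with hW
    have hWcont : ContinuousOn W Ω := (projPerp e).continuous.comp_continuousOn hcont
    have hs := meas_level hΩo hWcont 0
    have := aux_fderiv_zero hs (fun x hx => hx.2)
    filter_upwards [this] with x hx hyp
    obtain ⟨hxΩ, hV0, hdir, hdiff⟩ := hyp
    have hn : ‖V x‖ ≠ 0 := norm_ne_zero_iff.2 hV0
    have hVx : V x = ‖V x‖ • e := by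
      rw [← hdir, smul_smul, mul_inv_cancel₀ hn, one_smul]
    have hWx : W x = 0 := by
      simp only [hW, projPerp, ContinuousLinearMap.sub_apply, ContinuousLinearMap.coe_id',
        id_eq, ContinuousLinearMap.smulRight_apply, innerSL_apply_apply]
      rw [hVx, real_inner_smul_right, real_inner_self_eq_norm_sq, he]
      simp [smul_smul]
    have hWdiff : DifferentiableAt ℝ W x := ((projPerp e).differentiableAt).comp x hdiff
    have hcomp : fderiv ℝ W x = (projPerp e).comp (fderiv ℝ V x) := by
      have := fderiv_comp x ((projPerp e).differentiableAt) hdiff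
      simpa [ContinuousLinearMap.fderiv, Function.comp_def, hW] using this
    rw [← hcomp]
    exact hx ⟨⟨hxΩ, hWx⟩, hWdiff⟩

end
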